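/- Let q = 2^r and consider, for k ≥ 0 and l ∈ ℤ with k + 2 ≡ 2l mod (q-1), the set P(k+2, l, q) = { j ∈ ℕ : 0 ≤ j < k/2, j ≡ l - 1 mod (q - 1), and C(k - j, j) is odd }. Then #P(k+2, l, q) = O(k^{log₂ φ}) where φ = (1 + √5)/2; concretely, #P(k+2, l, q) ≤ a_k where a_k is the Stern-Brocot sequence, and a_k ≤ F_{N+1} whenever k ≤ 2^N - 1. -/
import Mathlib


open Finset

/-- The Stern-Brocot sequence: `a₀ = a₁ = 1`, `a_{2n} = a_n + a_{n-1}` and `a_{2n+1} = a_n`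
for `n ≥ 1`. -/
def stern : ℕ → ℕ
  | 0 => 1
  | 1 => 1
  | n + 2 =>
    if (n + 2) % 2 = 0 then stern ((n + 2) / 2) + stern ((n + 2) / 2 - 1)
    else stern ((n + 2) / 2)
decreasing_by all_goals omega

lemma stern_even (t : ℕ) (ht : 1 ≤ t) : stern (2 * t) = stern t + stern (t - 1) := by
  obtain ⟨m, rfl⟩ := Nat.exists_eq_add_of_le ht
  rw [show 2 * (1 + m) = 2 * m + 2 by ring, stern]
  have h1 : (2 * m + 2) % 2 = 0 := by omega
  have h2 : (2 * m + 2) / 2 = 1 + m := by omega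
  simp [h1, h2]

lemma stern_odd (t : ℕ) : stern (2 * t + 1) = stern t := by
  match t with
  | 0 => simp [stern]
  | m + 1 =>
    rw [show 2 * (m + 1) + 1 = 2 * m + 1 + 2 by ring, stern]
    have h1 : (2 * m + 1 + 2) % 2 = 1 := by omega
    have h2 : (2 * m + 1 + 2) / 2 = m + 1 := by omega
    simp [h1, h2]

instance : Fact (Nat.Prime 2) := ⟨Nat.prime_two⟩

lemma lucas2 (n k : ℕ) :
    Nat.choose n k % 2 = (Nat.choose (n % 2) (k % 2) * Nat.choose (n / 2) (k / 2)) % 2 :=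
  Choose.choose_modEq_choose_mod_mul_choose_div_nat (p := 2)

lemma par_ee (a b : ℕ) : Nat.choose (2 * a) (2 * b) % 2 = Nat.choose a b % 2 := by
  rw [lucas2]
  simp [Nat.mul_mod_right, Nat.mul_div_cancel_left]

lemma par_oe (a b : ℕ) : Nat.choose (2 * a + 1) (2 * b) % 2 = Nat.choose a b % 2 := by
  rw [lucas2]
  have h1 : (2 * a + 1) % 2 = 1 := by omega
  have h2 : (2 * a + 1) / 2 = a := by omega
  simp [h1, h2, Nat.mul_mod_right, Nat.mul_div_cancel_left]

lemma par_oo (a b : ℕ) : Nat.choose (2 * a + 1) (2 * b + 1) % 2 = Nat.choose a b % 2 := by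
  rw [lucas2]
  have h1 : (2 * a + 1) % 2 = 1 := by omega
  have h2 : (2 * a + 1) / 2 = a := by omega
  have h3 : (2 * b + 1) % 2 = 1 := by omega
  have h4 : (2 * b + 1) / 2 = b := by omega
  simp [h1, h2, h3, h4]

lemma par_eo (a b : ℕ) : Nat.choose (2 * a) (2 * b + 1) % 2 = 0 := by
  rw [lucas2]
  have h3 : (2 * b + 1) % 2 = 1 := by omega
  simp [h3, Nat.mul_mod_right]

def g (n : ℕ) : ℕ := ∑ j ∈ Finset.range (n + 1), Nat.choose (n - j) j % 2

lemma sum_split (m : ℕ) (f : ℕ → ℕ) :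
    ∑ j ∈ Finset.range (2 * m), f j = ∑ i ∈ Finset.range m, (f (2 * i) + f (2 * i + 1)) := by
  induction m with
  | zero => simp
  | succ n ih =>
    rw [Finset.sum_range_succ, ← ih, show 2 * (n + 1) = 2 * n + 1 + 1 by ring,
      Finset.sum_range_succ, Finset.sum_range_succ]
    ring

lemma g_eq_stern (n : ℕ) : g n = stern n := by
  induction n using Nat.strong_induction_on with
  | _ n ih =>
    rcases Nat.even_or_odd n with ⟨t, ht⟩ | ⟨t, ht⟩
    · -- n = 2t
      have hn : n = 2 * t := by omega
      subst hn
      rcases Nat.eq_zero_or_pos t with rfl | htpos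
      · simp [g, stern]
      · rw [g, Finset.sum_range_succ, show Nat.choose (2 * t - 2 * t) (2 * t) % 2 = 0 by
          rw [Nat.sub_self, Nat.choose_eq_zero_of_lt (show 0 < 2 * t by omega)]]
        rw [add_zero, sum_split]
        have hcong : ∀ i ∈ Finset.range t,
            Nat.choose (2 * t - 2 * i) (2 * i) % 2 + Nat.choose (2 * t - (2 * i + 1)) (2 * i + 1) % 2
              = Nat.choose (t - i) i % 2 + Nat.choose (t - 1 - i) i % 2 := by
          intro i hi
          rw [Finset.mem_range] at hi
          rw [show 2 * t - 2 * i = 2 * (t - i) by omega,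
            show 2 * t - (2 * i + 1) = 2 * (t - 1 - i) + 1 by omega, par_ee, par_oo]
        rw [Finset.sum_congr rfl hcong, Finset.sum_add_distrib]
        have h1 : ∑ i ∈ Finset.range t, Nat.choose (t - i) i % 2 = g t := by
          rw [g, Finset.sum_range_succ, Nat.sub_self,
            Nat.choose_eq_zero_of_lt (show 0 < t by omega), Nat.zero_mod, add_zero]
        have h2 : ∑ i ∈ Finset.range t, Nat.choose (t - 1 - i) i % 2 = g (t - 1) := by
          rw [g, show t - 1 + 1 = t by omega]
        rw [h1, h2, ih t (by omega), ih (t - 1) (by omega), stern_even t htpos]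
    · -- n = 2t+1
      have hn : n = 2 * t + 1 := by omega
      subst hn
      rw [g, show 2 * t + 1 + 1 = 2 * (t + 1) by ring, sum_split]
      have hcong : ∀ i ∈ Finset.range (t + 1),
          Nat.choose (2 * t + 1 - 2 * i) (2 * i) % 2
            + Nat.choose (2 * t + 1 - (2 * i + 1)) (2 * i + 1) % 2
            = Nat.choose (t - i) i % 2 := by
        intro i hi
        rw [Finset.mem_range] at hi
        rw [show 2 * t + 1 - 2 * i = 2 * (t - i) + 1 by omega,
          show 2 * t + 1 - (2 * i + 1) = 2 * (t - i) by omega, par_oe, par_eo, add_zero]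
      rw [Finset.sum_congr rfl hcong, ← g, ih t (by omega), stern_odd]

lemma stern_bound : ∀ N k, k < 2 ^ N →
    stern k ≤ Nat.fib (N + 1) ∧ (1 ≤ k → stern k + stern (k - 1) ≤ Nat.fib (N + 2)) := by
  intro N
  induction N with
  | zero =>
    intro k hk
    have : k = 0 := by simpa using hk
    subst this
    simp [stern]
  | succ N ih =>
    intro k hk
    rw [show N + 1 + 1 = N + 2 by omega, show N + 1 + 2 = N + 3 by omega]
    have hs0 : stern 0 = 1 := by simp [stern]
    have hs1 : stern 1 = 1 := by simp [stern]
    have hf2 : 0 < Nat.fib (N + 2) := Nat.fib_pos.mpr (by omega)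
    have hf3 : 2 ≤ Nat.fib (N + 3) := le_trans (by norm_num) (Nat.fib_mono (show 3 ≤ N + 3 by omega))
    have hadd : Nat.fib (N + 3) = Nat.fib (N + 1) + Nat.fib (N + 2) := by
      rw [show N + 3 = (N + 1) + 2 by omega, Nat.fib_add_two, show N + 1 + 1 = N + 2 by omega]
    have hmono : Nat.fib (N + 1) ≤ Nat.fib (N + 2) := Nat.fib_mono (by omega)
    match k with
    | 0 => exact ⟨by omega, by omega⟩
    | 1 => exact ⟨by omega, fun _ => by rw [hs1, hs0]; omega⟩
    | (m + 2) =>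
      rcases Nat.even_or_odd (m + 2) with ⟨t, htt⟩ | ⟨t, htt⟩
      · have hk2 : m + 2 = 2 * t := by omega
        have ht1 : 1 ≤ t := by omega
        have htN : t < 2 ^ N := by
          have := Nat.pow_succ 2 N; omega
        obtain ⟨h1, h2⟩ := ih t htN
        obtain ⟨h1', _⟩ := ih (t - 1) (by omega)
        have h2' := h2 ht1
        constructor
        · rw [hk2, stern_even t ht1]; exact h2'
        · intro _
          rw [hk2, stern_even t ht1, show 2 * t - 1 = 2 * (t - 1) + 1 by omega, stern_odd]
          omega
      · have hk2 : m + 2 = 2 * t + 1 := by omega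
        have ht1 : 1 ≤ t := by omega
        have htN : t < 2 ^ N := by
          have := Nat.pow_succ 2 N; omega
        obtain ⟨h1, h2⟩ := ih t htN
        have h2' := h2 ht1
        constructor
        · rw [hk2, stern_odd]; omega
        · intro _
          rw [hk2, stern_odd, show 2 * t + 1 - 1 = 2 * t by omega, stern_even t ht1]
          omega

open scoped Classical

/-- Let `q = 2^r` and, for `k ≥ 0` and `l ∈ ℤ` with `k + 2 ≡ 2l (mod q-1)`, let
`P(k+2, l, q) = { j ∈ ℕ : 2j < k, j ≡ l - 1 (mod q-1), C(k-j, j) odd }`. Then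
`#P(k+2, l, q) ≤ a_k` (Stern-Brocot sequence), and `max_{k ≤ 2^N - 1} a_k ≤ F_{N+1}`
(Fibonacci); hence `#P(k+2, l, q) = O(k^{log₂ φ})`. -/
theorem stmt18 (r : ℕ) (hr : 1 ≤ r) (k : ℕ) (l : ℤ)
    (hcong : ((k : ℤ) + 2) % ((2 : ℤ) ^ r - 1) = (2 * l) % ((2 : ℤ) ^ r - 1)) (N : ℕ) :
    ((Finset.range k).filter
        (fun j => 2 * j < k ∧ (j : ℤ) % ((2 : ℤ) ^ r - 1) = (l - 1) % ((2 : ℤ) ^ r - 1) ∧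
          Odd (Nat.choose (k - j) j))).card ≤ stern k ∧
      (Finset.range (2 ^ N)).sup stern ≤ Nat.fib (N + 1) := by
  constructor
  · calc ((Finset.range k).filter _).card
        = ∑ j ∈ Finset.range k, if (2 * j < k ∧ (j : ℤ) % ((2 : ℤ) ^ r - 1) = (l - 1) % ((2 : ℤ) ^ r - 1) ∧
          Odd (Nat.choose (k - j) j)) then 1 else 0 := by
          rw [Finset.card_filter]
      _ ≤ ∑ j ∈ Finset.range k, Nat.choose (k - j) j % 2 := by
          apply Finset.sum_le_sum
          intro j _
          split_ifs with h
          · rw [Nat.odd_iff.mp h.2.2]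
          · omega
      _ ≤ ∑ j ∈ Finset.range (k + 1), Nat.choose (k - j) j % 2 :=
          Finset.sum_le_sum_of_subset (Finset.range_subset_range.mpr (by omega))
      _ = g k := rfl
      _ = stern k := g_eq_stern k
  · apply Finset.sup_le
    intro b hb
    exact (stern_bound N b (Finset.mem_range.mp hb)).1
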